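/- Every extended quota majority method on n voters admits a proper representation: for every tuple 𝐣 = (j_0,…,j_r) of distinct elements of {0,…,n+1} with j_r ∈ {0,n+1}, there exists a subsequence 𝐤 = (k_0,…,k_t) of 𝐣 which is proper (the odd-indexed entries after k_0 alternately go strictly above and strictly below all previous entries in an up-down or down-up pattern, with k_t ∈ {0,n+1}) such that φ_𝐣 = φ_𝐤 as functions on all profiles. -/

import Mathlib

/-- Number of voters preferring alternative `a`. -/
def countA (n : ℕ) (P : Fin n → Option Bool) : ℕ :=
  (Finset.univ.filter fun v => P v = some true).card

/-- Number of voters preferring alternative `b`. -/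
def countB (n : ℕ) (P : Fin n → Option Bool) : ℕ :=
  (Finset.univ.filter fun v => P v = some false).card

/-- The defining condition at quota `k`: at least `k` voters prefer `a`
or at least `n + 1 - k` voters prefer `b`. -/
def hits (n : ℕ) (P : Fin n → Option Bool) (k : ℕ) : Bool :=
  decide (k ≤ countA n P ∨ n + 1 - k ≤ countB n P)

/-- The (generalized) extended quota majority method attached to a list of quotas:
find the least index whose quota condition holds, and output `true` (= a) iff the
a-branch of that condition holds. -/
def phi (n : ℕ) (l : List ℕ) (P : Fin n → Option Bool) : Bool :=
  decide (l.getD (l.findIdx (hits n P)) (n + 1) ≤ countA n P)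

/-- A valid tuple for an extended quota majority method: nonempty, distinct entries
from `{0, …, n+1}`, last entry in `{0, n+1}`. -/
def Valid (n : ℕ) (l : List ℕ) : Prop :=
  l ≠ [] ∧ l.Nodup ∧ (∀ x ∈ l, x ≤ n + 1) ∧
    (l.getLast? = some 0 ∨ l.getLast? = some (n + 1))

/-- A tuple `(k_0, k_1, …, k_t)` is proper: at least two entries, distinct entries
from `{0, …, n+1}`, last entry in `{0, n+1}`, any two consecutive entries of the
tail `k_1, k_2, …` lie strictly on opposite sides of `k_0`, and along each side the
entries become strictly more extreme. -/
def Proper (n : ℕ) (l : List ℕ) : Prop :=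
  2 ≤ l.length ∧ l.Nodup ∧ (∀ x ∈ l, x ≤ n + 1) ∧
  (l.getLast? = some 0 ∨ l.getLast? = some (n + 1)) ∧
  (∀ i, i + 2 < l.length →
    (l.getD (i + 1) 0 < l.getD 0 0 ∧ l.getD 0 0 < l.getD (i + 2) 0) ∨
    (l.getD (i + 2) 0 < l.getD 0 0 ∧ l.getD 0 0 < l.getD (i + 1) 0)) ∧
  (∀ i, i + 3 < l.length →
    (l.getD (i + 1) 0 < l.getD 0 0 → l.getD (i + 3) 0 < l.getD (i + 1) 0) ∧
    (l.getD 0 0 < l.getD (i + 1) 0 → l.getD (i + 1) 0 < l.getD (i + 3) 0))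

section quota

variable {n : ℕ} {P : Fin n → Option Bool}

lemma hits_eq_true' {k : ℕ} : hits n P k = true ↔ (k ≤ countA n P ∨ n+1 ≤ countB n P + k) := by
  simp only [hits, decide_eq_true_eq]
  omega

lemma hits_eq_false' {k : ℕ} : hits n P k = false ↔ (countA n P < k ∧ countB n P + k ≤ n) := by
  simp only [hits, decide_eq_false_iff_not]
  omega

lemma phi_cons_pos {x : ℕ} {t : List ℕ} (hx : hits n P x = true) :
    phi n (x::t) P = decide (x ≤ countA n P) := by
  simp [phi, List.findIdx_cons, hx]

lemma phi_cons_neg {x : ℕ} {t : List ℕ} (hx : hits n P x = false) :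
    phi n (x::t) P = phi n t P := by
  simp [phi, List.findIdx_cons, hx]

lemma phi_append_neg {u t : List ℕ} (hu : ∀ z ∈ u, hits n P z = false) :
    phi n (u ++ t) P = phi n t P := by
  induction u with
  | nil => rfl
  | cons a u ih =>
    rw [List.cons_append, phi_cons_neg (hu a (by simp))]
    exact ih fun z hz => hu z (by simp [hz])

lemma phi_append_pos {u t t' : List ℕ} (hu : ∃ z ∈ u, hits n P z = true) :
    phi n (u ++ t) P = phi n (u ++ t') P := by
  induction u with
  | nil => simp at hu
  | cons a u ih =>
    by_cases ha : hits n P a = true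
    · rw [List.cons_append, List.cons_append, phi_cons_pos ha, phi_cons_pos ha]
    · have ha' : hits n P a = false := by simpa using ha
      rw [List.cons_append, List.cons_append, phi_cons_neg ha', phi_cons_neg ha']
      apply ih
      obtain ⟨z, hz, h⟩ := hu
      rcases List.mem_cons.mp hz with rfl | hz
      · exact absurd h ha
      · exact ⟨z, hz, h⟩

lemma drop_a {u v : List ℕ} {x z1 z2 : ℕ} (h1 : z1 ∈ u) (h2 : z2 ∈ u)
    (hx1 : z1 < x) (hx2 : x < z2) :
    phi n (u ++ x :: v) P = phi n (u ++ v) P := by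
  by_cases hu : ∀ z ∈ u, hits n P z = false
  · rw [phi_append_neg hu, phi_append_neg hu]
    have e1 := hits_eq_false'.1 (hu z1 h1)
    have e2 := hits_eq_false'.1 (hu z2 h2)
    rw [phi_cons_neg (hits_eq_false'.2 (by omega))]
  · apply phi_append_pos
    push_neg at hu
    obtain ⟨z, hz, h⟩ := hu
    exact ⟨z, hz, by simpa using h⟩

lemma drop_b {u v : List ℕ} {x y z : ℕ} (hz : z ∈ u)
    (hcase : (x < y ∧ z < x) ∨ (y < x ∧ x < z)) :
    phi n (u ++ x :: y :: v) P = phi n (u ++ y :: v) P := by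
  by_cases hu : ∀ w ∈ u, hits n P w = false
  · rw [phi_append_neg hu, phi_append_neg hu]
    have ez := hits_eq_false'.1 (hu z hz)
    by_cases hx : hits n P x = true
    · have hx' := hits_eq_true'.1 hx
      have hy : hits n P y = true := hits_eq_true'.2 (by omega)
      rw [phi_cons_pos hx, phi_cons_pos hy, decide_eq_decide]
      omega
    · rw [phi_cons_neg (by simpa using hx)]
  · apply phi_append_pos
    push_neg at hu
    obtain ⟨w, hw, h⟩ := hu
    exact ⟨w, hw, by simpa using h⟩

lemma mem_take_of_lt {l : List ℕ} {i j : ℕ} (hj : j < i) (hi : i < l.length) :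
    l.getD j 0 ∈ l.take i := by
  have hj' : j < l.length := by omega
  have hjt : j < (l.take i).length := by simp; omega
  have : (l.take i)[j]'hjt = l[j]'hj' := List.getElem_take
  rw [List.getD_eq_getElem l 0 hj', ← this]
  exact List.getElem_mem hjt

lemma step_a {l : List ℕ} {i j j' : ℕ} (hj : j < i) (hj' : j' < i) (hi : i < l.length)
    (h1 : l.getD j 0 < l.getD i 0) (h2 : l.getD i 0 < l.getD j' 0) :
    phi n (l.eraseIdx i) P = phi n l P := by
  have hd : l = l.take i ++ l.getD i 0 :: l.drop (i+1) := by
    rw [List.getD_eq_getElem l 0 hi, ← List.drop_eq_getElem_cons hi, List.take_append_drop]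
  rw [List.eraseIdx_eq_take_drop_succ]
  conv_rhs => rw [hd]
  exact (drop_a (mem_take_of_lt hj hi) (mem_take_of_lt hj' hi) h1 h2).symm

lemma step_b {l : List ℕ} {i j : ℕ} (hj : j < i) (hi : i + 1 < l.length)
    (hcase : (l.getD i 0 < l.getD (i+1) 0 ∧ l.getD j 0 < l.getD i 0) ∨
      (l.getD (i+1) 0 < l.getD i 0 ∧ l.getD i 0 < l.getD j 0)) :
    phi n (l.eraseIdx i) P = phi n l P := by
  have hi' : i < l.length := by omega
  have hd : l = l.take i ++ l.getD i 0 :: l.getD (i+1) 0 :: l.drop (i+2) := by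
    rw [List.getD_eq_getElem l 0 hi', List.getD_eq_getElem l 0 hi,
      ← List.drop_eq_getElem_cons hi, ← List.drop_eq_getElem_cons hi', List.take_append_drop]
  have hd' : l.eraseIdx i = l.take i ++ l.getD (i+1) 0 :: l.drop (i+2) := by
    rw [List.eraseIdx_eq_take_drop_succ, List.getD_eq_getElem l 0 hi,
      ← List.drop_eq_getElem_cons hi]
  rw [hd']
  conv_rhs => rw [hd]
  exact (drop_b (mem_take_of_lt hj hi') (by tauto)).symm

/-- The droppability predicate. -/
def Droppable (l : List ℕ) : Prop :=
  (∃ i j j', j < i ∧ j' < i ∧ i < l.length ∧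
      l.getD j 0 < l.getD i 0 ∧ l.getD i 0 < l.getD j' 0) ∨
  (∃ i j, j < i ∧ i + 1 < l.length ∧
      ((l.getD i 0 < l.getD (i+1) 0 ∧ l.getD j 0 < l.getD i 0) ∨
       (l.getD (i+1) 0 < l.getD i 0 ∧ l.getD i 0 < l.getD j 0)))

lemma proper_of_not_droppable {l : List ℕ} (h2 : 2 ≤ l.length) (hnd : l.Nodup)
    (hbd : ∀ x ∈ l, x ≤ n + 1)
    (hlast : l.getLast? = some 0 ∨ l.getLast? = some (n + 1))
    (hd : ¬ Droppable l) : Proper n l := by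
  have hne : ∀ i j, i < l.length → j < l.length → i ≠ j → l.getD i 0 ≠ l.getD j 0 := by
    intro i j hi hj hij
    rw [List.getD_eq_getElem l 0 hi, List.getD_eq_getElem l 0 hj]
    exact fun h => hij (hnd.getElem_inj_iff.mp h)
  have hA : ∀ i j j', j < i → j' < i → i < l.length →
      l.getD i 0 ≤ l.getD j 0 ∨ l.getD j' 0 ≤ l.getD i 0 := by
    intro i j j' hj hj' hi
    by_contra h
    push_neg at h
    exact hd (Or.inl ⟨i, j, j', hj, hj', hi, by omega, by omega⟩)
  have hB : ∀ i j, j < i → i + 1 < l.length →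
      ¬(l.getD i 0 < l.getD (i+1) 0 ∧ l.getD j 0 < l.getD i 0) ∧
      ¬(l.getD (i+1) 0 < l.getD i 0 ∧ l.getD i 0 < l.getD j 0) := by
    intro i j hj hi
    constructor <;> intro hc <;> exact hd (Or.inr ⟨i, j, hj, hi, by tauto⟩)
  have hRec : ∀ i, 1 ≤ i → i < l.length →
      (∀ j, j < i → l.getD j 0 < l.getD i 0) ∨ (∀ j, j < i → l.getD i 0 < l.getD j 0) := by
    intro i h1 hi
    by_contra h
    push_neg at h
    obtain ⟨⟨j, hj, hij⟩, ⟨j', hj', hij'⟩⟩ := h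
    have e1 := hne i j hi (by omega) (by omega)
    have e2 := hne i j' hi (by omega) (by omega)
    rcases hA i j' j hj' hj hi with h | h <;> omega
  have hAlt : ∀ i, 1 ≤ i → i + 1 < l.length →
      (l.getD 0 0 < l.getD i 0 → l.getD (i+1) 0 < l.getD 0 0) ∧
      (l.getD i 0 < l.getD 0 0 → l.getD 0 0 < l.getD (i+1) 0) := by
    intro i h1 hi
    rcases hRec (i+1) (by omega) (by omega) with h | h
    · have hi1 := h i (by omega)
      have h01 := h 0 (by omega)
      have := (hB i 0 h1 hi).1
      constructor <;> intro hc <;> omega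
    · have hi1 := h i (by omega)
      have h01 := h 0 (by omega)
      have := (hB i 0 h1 hi).2
      constructor <;> intro hc <;> omega
  have hSide : ∀ i, 1 ≤ i → i < l.length → l.getD i 0 < l.getD 0 0 ∨ l.getD 0 0 < l.getD i 0 := by
    intro i h1 hi
    rcases hRec i h1 hi with h | h
    · exact Or.inr (h 0 (by omega))
    · exact Or.inl (h 0 (by omega))
  refine ⟨h2, hnd, hbd, hlast, ?_, ?_⟩
  · intro i hi
    rcases hSide (i+1) (by omega) (by omega) with h | h
    · exact Or.inl ⟨h, (hAlt (i+1) (by omega) (by omega)).2 h⟩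
    · exact Or.inr ⟨(hAlt (i+1) (by omega) (by omega)).1 h, h⟩
  · intro i hi
    constructor
    · intro h
      have h2' : l.getD 0 0 < l.getD (i+2) 0 := (hAlt (i+1) (by omega) (by omega)).2 h
      have h3 : l.getD (i+3) 0 < l.getD 0 0 := (hAlt (i+2) (by omega) (by omega)).1 h2'
      rcases hRec (i+3) (by omega) (by omega) with hr | hr
      · have := hr 0 (by omega); omega
      · exact hr (i+1) (by omega)
    · intro h
      have h2' : l.getD (i+2) 0 < l.getD 0 0 := (hAlt (i+1) (by omega) (by omega)).1 h
      have h3 : l.getD 0 0 < l.getD (i+3) 0 := (hAlt (i+2) (by omega) (by omega)).2 h2'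
      rcases hRec (i+3) (by omega) (by omega) with hr | hr
      · exact hr (i+1) (by omega)
      · have := hr 0 (by omega); omega

lemma key : ∀ N, ∀ l : List ℕ, l.length ≤ N → 2 ≤ l.length → l.Nodup →
    (∀ x ∈ l, x ≤ n + 1) → (l.getLast? = some 0 ∨ l.getLast? = some (n + 1)) →
    ∃ k : List ℕ, k.Sublist l ∧ Proper n k ∧
      ∀ P : Fin n → Option Bool, phi n k P = phi n l P := by
  intro N
  induction N with
  | zero => intro l h h2 _ _ _; omega
  | succ N ih =>
    intro l hlen h2 hnd hbd hlast
    by_cases hd : Droppable l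
    · -- pick the index i to erase; in all cases 1 ≤ i and i + 1 < l.length
      obtain ⟨i, hi1, hi2, hstep⟩ : ∃ i, 1 ≤ i ∧ i + 1 < l.length ∧
          ∀ P : Fin n → Option Bool, phi n (l.eraseIdx i) P = phi n l P := by
        rcases hd with ⟨i, j, j', hj, hj', hi, hl1, hl2⟩ | ⟨i, j, hj, hi, hcase⟩
        · refine ⟨i, by omega, ?_, fun P => step_a hj hj' hi hl1 hl2⟩
          -- i is not the last index
          by_contra hc
          have hil : i = l.length - 1 := by omega
          have hlasti : l.getLast? = some (l.getD i 0) := by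
            rw [List.getLast?_eq_getElem?, ← hil, List.getElem?_eq_getElem hi,
              List.getD_eq_getElem l 0 hi]
          have hbj' : l.getD j' 0 ≤ n + 1 := by
            refine hbd _ ?_
            rw [List.getD_eq_getElem l 0 (by omega : j' < l.length)]
            exact List.getElem_mem _
          rcases hlast with hl | hl <;> rw [hlasti] at hl <;>
            simp only [Option.some.injEq] at hl <;> omega
        · exact ⟨i, by omega, hi, fun P => step_b hj hi hcase⟩
      set l' := l.eraseIdx i with hl'
      have hsub : l'.Sublist l := List.eraseIdx_sublist l i
      have hlen' : l'.length = l.length - 1 := by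
        rw [hl', List.length_eraseIdx]
        simp [show i < l.length by omega]
      have hlast' : l'.getLast? = l.getLast? := by
        rw [List.getLast?_eq_getElem?, List.getLast?_eq_getElem?, hlen']
        rw [hl', List.getElem?_eraseIdx]
        have : ¬ (l.length - 1 - 1 < i) := by omega
        rw [if_neg this]
        congr 1
        omega
      obtain ⟨k, hk1, hk2, hk3⟩ := ih l' (by omega) (by omega) (hsub.nodup hnd)
        (fun x hx => hbd x (hsub.mem hx)) (hlast' ▸ hlast)
      exact ⟨k, hk1.trans hsub, hk2, fun P => (hk3 P).trans (hstep P)⟩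
    · exact ⟨l, List.Sublist.refl l, proper_of_not_droppable h2 hnd hbd hlast hd, fun _ => rfl⟩

end quota

/-- every extended quota majority method admits a proper
representation by a subsequence of its defining tuple. -/
theorem stmt_11 (n : ℕ) (hn : 1 ≤ n) (l : List ℕ)
    (hlen : 2 ≤ l.length) (hnd : l.Nodup) (hbd : ∀ x ∈ l, x ≤ n + 1)
    (hlast : l.getLast? = some 0 ∨ l.getLast? = some (n + 1)) :
    ∃ k : List ℕ, k.Sublist l ∧ Proper n k ∧
      ∀ P : Fin n → Option Bool, phi n k P = phi n l P := by
  exact key l.length l le_rfl hlen hnd hbd hlast
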